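/- If C has binary coproducts, D has binary products, and G : C → D has a left adjoint, then the forgetful functor from the scone D ↓ G to D × C is both comonadic and monadic. -/

import Mathlib

/-!
If `C` has binary coproducts, `D` has binary products, and `G : C ⥤ D` has a left adjoint,
then the forgetful functor from the scone `D ↓ G` to `D × C` is both comonadic and monadic.
-/

universe v₁ v₂ u₁ u₂

open CategoryTheory CategoryTheory.Limits

namespace SconeProofAux

section ProdLimits

variable {A : Type*} [Category A] {B : Type*} [Category B]
variable {J : Type*} [Category J]

/-- A cone in a product category whose two projections are limit cones is a limit cone. -/
def prodConeIsLimit {K : J ⥤ A × B} (c : Cone K)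
    (h₁ : IsLimit ((CategoryTheory.Prod.fst A B).mapCone c))
    (h₂ : IsLimit ((CategoryTheory.Prod.snd A B).mapCone c)) : IsLimit c where
  lift s := (h₁.lift ((CategoryTheory.Prod.fst A B).mapCone s),
             h₂.lift ((CategoryTheory.Prod.snd A B).mapCone s))
  fac s j := Prod.ext (h₁.fac _ j) (h₂.fac _ j)
  uniq s m w := Prod.ext
    (h₁.uniq ((CategoryTheory.Prod.fst A B).mapCone s) m.1 fun j => congrArg Prod.fst (w j))
    (h₂.uniq ((CategoryTheory.Prod.snd A B).mapCone s) m.2 fun j => congrArg Prod.snd (w j))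

/-- A cocone in a product category whose two projections are colimit cocones is colimit. -/
def prodCoconeIsColimit {K : J ⥤ A × B} (c : Cocone K)
    (h₁ : IsColimit ((CategoryTheory.Prod.fst A B).mapCocone c))
    (h₂ : IsColimit ((CategoryTheory.Prod.snd A B).mapCocone c)) : IsColimit c where
  desc s := (h₁.desc ((CategoryTheory.Prod.fst A B).mapCocone s),
             h₂.desc ((CategoryTheory.Prod.snd A B).mapCocone s))
  fac s j := Prod.ext (h₁.fac _ j) (h₂.fac _ j)
  uniq s m w := Prod.ext
    (h₁.uniq ((CategoryTheory.Prod.fst A B).mapCocone s) m.1 fun j => congrArg Prod.fst (w j))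
    (h₂.uniq ((CategoryTheory.Prod.snd A B).mapCocone s) m.2 fun j => congrArg Prod.snd (w j))

end ProdLimits

section Scone

variable {C : Type u₁} [Category.{v₁} C] {D : Type u₂} [Category.{v₂} D]
variable (G : C ⥤ D)

/-- The forgetful functor from the scone. -/
abbrev U : Comma (𝟭 D) G ⥤ D × C := (Comma.fst (𝟭 D) G).prod' (Comma.snd (𝟭 D) G)

/-- The forgetful functor reflects isomorphisms. -/
instance reflectsIsosU : (U G).ReflectsIsomorphisms := by
  constructor
  intro X Y f hf
  have h1 : IsIso f.left :=
    (inferInstance : IsIso ((CategoryTheory.Prod.fst D C).map ((U G).map f)))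
  have h2 : IsIso f.right :=
    (inferInstance : IsIso ((CategoryTheory.Prod.snd D C).map ((U G).map f)))
  refine ⟨⟨⟨inv f.left, inv f.right, ?_⟩, ?_, ?_⟩⟩
  · simp only [Functor.id_map, Functor.map_inv]
    rw [IsIso.eq_comp_inv, Category.assoc, ← f.w]
    simp
  · ext <;> simp
  · ext <;> simp

section RightAdjoint

variable [HasBinaryProducts D]

/-- The right adjoint of the forgetful functor. -/
@[simps]
noncomputable def Rt : D × C ⥤ Comma (𝟭 D) G where
  obj P :=
    { left := P.1 ⨯ G.obj P.2
      right := P.2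
      hom := Limits.prod.snd }
  map h :=
    { left := Limits.prod.map h.1 (G.map h.2)
      right := h.2
      w := by simp }

/-- The adjunction between the forgetful functor and its right adjoint. -/
noncomputable def adjUR : U G ⊣ Rt G :=
  Adjunction.mkOfHomEquiv
    { homEquiv := fun X P =>
        { toFun := fun k =>
            { left := Limits.prod.lift k.1 (X.hom ≫ G.map k.2)
              right := k.2
              w := prod.lift_snd _ _ }
          invFun := fun m => (m.left ≫ Limits.prod.fst, m.right)
          left_inv := fun k => Prod.ext (prod.lift_fst _ _) rfl
          right_inv := fun m => by
            ext
            · apply Limits.prod.hom_ext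
              · exact prod.lift_fst _ _
              · exact (prod.lift_snd _ _).trans m.w.symm
            · rfl }
      homEquiv_naturality_left_symm := fun f k => by
        ext
        · exact Category.assoc _ _ _
        · rfl
      homEquiv_naturality_right := fun k h => by
        ext
        · apply Limits.prod.hom_ext
          · simp
            erw [Category.assoc, prod.map_fst, prod.lift_fst_assoc]
            exact prod.lift_fst _ _
          · simp
            erw [Category.assoc, prod.map_snd, prod.lift_snd_assoc, Category.assoc]
            exact prod.lift_snd _ _
        · rfl }

end RightAdjoint

section LeftAdjoint

variable [HasBinaryCoproducts C] {F : D ⥤ C} (adj : F ⊣ G)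

/-- The left adjoint of the forgetful functor. -/
@[simps]
noncomputable def Lf : D × C ⥤ Comma (𝟭 D) G where
  obj P :=
    { left := P.1
      right := F.obj P.1 ⨿ P.2
      hom := adj.unit.app P.1 ≫ G.map coprod.inl }
  map {P Q} h :=
    { left := h.1
      right := coprod.map (F.map h.1) h.2
      w := by
        simp only [Functor.id_map]
        rw [show h.1 ≫ adj.unit.app Q.1 ≫ G.map coprod.inl
            = adj.unit.app P.1 ≫ G.map (F.map h.1) ≫ G.map coprod.inl from by
          rw [← Category.assoc, ← Category.assoc]
          congr 1
          simpa using adj.unit.naturality h.1]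
        simp only [Category.assoc, ← G.map_comp, coprod.inl_map] }

/-- The adjunction between the left adjoint and the forgetful functor. -/
noncomputable def adjLU : Lf G adj ⊣ U G :=
  Adjunction.mkOfHomEquiv
    { homEquiv := fun P X =>
        { toFun := fun m => (m.left, coprod.inr ≫ m.right)
          invFun := fun k =>
            { left := k.1
              right := coprod.desc ((adj.homEquiv P.1 X.right).symm (k.1 ≫ X.hom)) k.2
              w := by
                erw [Functor.id_map, Lf_obj_hom, Category.assoc, ← G.map_comp, coprod.inl_desc]
                exact ((adj.homEquiv _ _).apply_symm_apply _).symm.trans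
                  (adj.homEquiv_unit _ _ _) }
          left_inv := fun m => by
            ext
            · rfl
            · apply coprod.hom_ext
              · rw [coprod.inl_desc]
                apply (adj.homEquiv _ _).symm_apply_eq.mpr
                rw [Adjunction.homEquiv_unit]
                exact m.w.trans ((Category.assoc _ _ _).trans (congrArg _ (G.map_comp _ _).symm))
              · exact coprod.inr_desc _ _
          right_inv := fun k => Prod.ext rfl (coprod.inr_desc _ _) }
      homEquiv_naturality_left_symm := fun f k => by
        ext
        · rfl
        · dsimp
          apply coprod.hom_ext
          · erw [coprod.inl_desc, coprod.inl_map_assoc, coprod.inl_desc]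
            exact (congrArg _ (Category.assoc _ _ _)).trans (adj.homEquiv_naturality_left_symm _ _)
          · erw [coprod.inr_desc, coprod.inr_map_assoc, coprod.inr_desc]
      homEquiv_naturality_right := fun m h => by
        ext
        · rfl
        · exact (Category.assoc _ _ _).symm }

end LeftAdjoint

section SplitPairs

variable {G}
variable {X Y : Comma (𝟭 D) G} (f g : X ⟶ Y)

/-- The parallel pair diagram composed with `Comma.fst`, as a parallel pair. -/
def iso₁ : parallelPair f g ⋙ Comma.fst (𝟭 D) G ≅ parallelPair f.left g.left :=
  diagramIsoParallelPair _

/-- The parallel pair diagram composed with `Comma.snd`, as a parallel pair. -/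
def iso₂ : parallelPair f g ⋙ Comma.snd (𝟭 D) G ≅ parallelPair f.right g.right :=
  diagramIsoParallelPair _

section Cosplit

variable [HasSplitEqualizer ((U G).map f) ((U G).map g)]

/-- The split equalizer on the first components. -/
noncomputable def q₁ : IsSplitEqualizer f.left g.left
    ((CategoryTheory.Prod.fst D C).map (HasSplitEqualizer.equalizerι ((U G).map f) ((U G).map g))) :=
  (HasSplitEqualizer.isSplitEqualizer ((U G).map f) ((U G).map g)).map (CategoryTheory.Prod.fst D C)

/-- The split equalizer on the second components. -/
noncomputable def q₂ : IsSplitEqualizer f.right g.right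
    ((CategoryTheory.Prod.snd D C).map (HasSplitEqualizer.equalizerι ((U G).map f) ((U G).map g))) :=
  (HasSplitEqualizer.isSplitEqualizer ((U G).map f) ((U G).map g)).map (CategoryTheory.Prod.snd D C)

/-- `G` preserves equalizers of pairs whose image under `U` is cosplit, since the second
component is a split equalizer, which is absolute. -/
noncomputable def presG : PreservesLimit (parallelPair f g ⋙ Comma.snd (𝟭 D) G) G := by
  have h : PreservesLimit (parallelPair f.right g.right) G :=
    preservesLimit_of_preserves_limit_cone (q₂ f g).isEqualizer
      ((isLimitMapConeForkEquiv G (q₂ f g).condition).symm ((q₂ f g).map G).isEqualizer)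
  exact preservesLimit_of_iso_diagram G (iso₂ f g).symm

/-- The limit cone over the first-component pair, as a cone over the composed diagram. -/
noncomputable def cone₁ : Cone (parallelPair f g ⋙ Comma.fst (𝟭 D) G) :=
  (Cones.postcompose (iso₁ f g).inv).obj (q₁ f g).asFork

noncomputable def cone₁IsLimit : IsLimit (cone₁ f g) :=
  (IsLimit.postcomposeInvEquiv (iso₁ f g) _).symm (q₁ f g).isEqualizer

noncomputable def cone₂ : Cone (parallelPair f g ⋙ Comma.snd (𝟭 D) G) :=
  (Cones.postcompose (iso₂ f g).inv).obj (q₂ f g).asFork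

noncomputable def cone₂IsLimit : IsLimit (cone₂ f g) :=
  (IsLimit.postcomposeInvEquiv (iso₂ f g) _).symm (q₂ f g).isEqualizer

/-- The equalizer cone in the scone. -/
noncomputable def commaCone : Cone (parallelPair f g) :=
  letI := presG f g
  Comma.coneOfPreserves _ (cone₁ f g) (cone₂IsLimit f g)

noncomputable def commaConeIsLimit : IsLimit (commaCone f g) :=
  letI := presG f g
  Comma.coneOfPreservesIsLimit _ (cone₁IsLimit f g) (cone₂IsLimit f g)

noncomputable def commaConeMapIsLimit : IsLimit ((U G).mapCone (commaCone f g)) := by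
  letI := presG f g
  exact prodConeIsLimit _ (cone₁IsLimit f g) (cone₂IsLimit f g)

end Cosplit

section Split

variable [HasSplitCoequalizer ((U G).map f) ((U G).map g)]

noncomputable def p₁ : IsSplitCoequalizer f.left g.left
    ((CategoryTheory.Prod.fst D C).map
      (HasSplitCoequalizer.coequalizerπ ((U G).map f) ((U G).map g))) :=
  (HasSplitCoequalizer.isSplitCoequalizer ((U G).map f) ((U G).map g)).map
    (CategoryTheory.Prod.fst D C)

noncomputable def p₂ : IsSplitCoequalizer f.right g.right
    ((CategoryTheory.Prod.snd D C).map
      (HasSplitCoequalizer.coequalizerπ ((U G).map f) ((U G).map g))) :=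
  (HasSplitCoequalizer.isSplitCoequalizer ((U G).map f) ((U G).map g)).map
    (CategoryTheory.Prod.snd D C)

noncomputable def cocone₁ : Cocone (parallelPair f g ⋙ Comma.fst (𝟭 D) G) :=
  (Cocone.precompose (iso₁ f g).hom).obj (p₁ f g).asCofork

noncomputable def cocone₁IsColimit : IsColimit (cocone₁ f g) :=
  (IsColimit.precomposeHomEquiv (iso₁ f g) _).symm (p₁ f g).isCoequalizer

noncomputable def cocone₂ : Cocone (parallelPair f g ⋙ Comma.snd (𝟭 D) G) :=
  (Cocone.precompose (iso₂ f g).hom).obj (p₂ f g).asCofork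

noncomputable def cocone₂IsColimit : IsColimit (cocone₂ f g) :=
  (IsColimit.precomposeHomEquiv (iso₂ f g) _).symm (p₂ f g).isCoequalizer

/-- The coequalizer cocone in the scone. -/
noncomputable def commaCocone : Cocone (parallelPair f g) :=
  Comma.coconeOfPreserves _ (cocone₁IsColimit f g) (cocone₂ f g)

noncomputable def commaCoconeIsColimit : IsColimit (commaCocone f g) :=
  Comma.coconeOfPreservesIsColimit _ (cocone₁IsColimit f g) (cocone₂IsColimit f g)

noncomputable def commaCoconeMapIsColimit : IsColimit ((U G).mapCocone (commaCocone f g)) :=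
  prodCoconeIsColimit _ (cocone₁IsColimit f g) (cocone₂IsColimit f g)

end Split

end SplitPairs

end Scone

end SconeProofAux

open SconeProofAux in
theorem scone_forgetful_functor_comonadic_and_monadic
    {C : Type u₁} [Category.{v₁} C] {D : Type u₂} [Category.{v₂} D]
    (G : C ⥤ D) [HasBinaryCoproducts C] [HasBinaryProducts D] [G.IsRightAdjoint] :
    Nonempty (ComonadicLeftAdjoint ((Comma.fst (𝟭 D) G).prod' (Comma.snd (𝟭 D) G))) ∧
    Nonempty (MonadicRightAdjoint ((Comma.fst (𝟭 D) G).prod' (Comma.snd (𝟭 D) G))) := by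
  have adj0 : G.leftAdjoint ⊣ G := Adjunction.ofIsRightAdjoint G
  haveI : Comonad.HasEqualizerOfIsCosplitPair (U G) :=
    ⟨fun {A B} f g _ => HasLimit.mk ⟨commaCone f g, commaConeIsLimit f g⟩⟩
  haveI : Comonad.PreservesLimitOfIsCosplitPair (U G) :=
    ⟨fun {A B} f g _ =>
      preservesLimit_of_preserves_limit_cone (commaConeIsLimit f g) (commaConeMapIsLimit f g)⟩
  haveI : Monad.HasCoequalizerOfIsSplitPair (U G) :=
    ⟨fun {A B} f g _ => HasColimit.mk ⟨commaCocone f g, commaCoconeIsColimit f g⟩⟩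
  haveI : Monad.PreservesColimitOfIsSplitPair (U G) :=
    ⟨fun {A B} f g _ =>
      preservesColimit_of_preserves_colimit_cocone (commaCoconeIsColimit f g)
        (commaCoconeMapIsColimit f g)⟩
  constructor
  · exact ⟨Comonad.comonadicOfHasPreservesFSplitEqualizersOfReflectsIsomorphisms (adjUR G)⟩
  · exact ⟨Monad.monadicOfHasPreservesGSplitCoequalizersOfReflectsIsomorphisms (adjLU G adj0)⟩
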